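/- Let n ≥ 1 and let D_n be the digraph on the 2n vertices u_1, v_1, …, u_n, v_n whose arcs are exactly (u_i, v_i) and (v_i, u_i) for 1 ≤ i ≤ n (the disjoint union of n bidirected 2-cycles). Then the minimum size of a feedback vertex set of D_n equals n. Together with MRB(D_n) = 1, this shows the gap between the minimum feedback vertex set size and the minimum number of running buffers can be arbitrarily large. -/

import Mathlib

open scoped Classical

/-- For a digraph with arc relation `A` on `V` and a set `S` of vertices,
`buffered A S` is the set of vertices of `S` having an arc to some vertex outside `S`. -/
noncomputable def buffered {V : Type*} [Fintype V] (A : V → V → Prop) (S : Finset V) :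
    Finset V :=
  S.filter (fun u => ∃ v, v ∉ S ∧ A u v)

/-- The number of running buffers of a linear ordering `φ` of the vertices of a digraph
with arc relation `A`. -/
noncomputable def RB {V : Type*} [Fintype V] (A : V → V → Prop) {n : ℕ} (φ : Fin n → V) :
    ℕ :=
  Finset.univ.sup (fun i : Fin n =>
    (buffered A ((Finset.univ.filter (fun j : Fin n => j < i)).image φ)).card +
      (if φ i ∈ buffered A ((Finset.univ.filter (fun j : Fin n => j ≤ i)).image φ)
        then 1 else 0))

/-- The minimum number of running buffers of a digraph with arc relation `A`. -/
noncomputable def MRB {V : Type*} [Fintype V] (A : V → V → Prop) : ℕ :=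
  sInf {k | ∃ φ : Fin (Fintype.card V) → V, Function.Bijective φ ∧ RB A φ = k}

/-- `W` is a feedback vertex set of the digraph with arc relation `A` if no vertex outside
`W` is reachable from itself by a nonempty directed walk avoiding `W`. -/
def IsFVS {V : Type*} (A : V → V → Prop) (W : Finset V) : Prop :=
  ∀ x : V, ¬ Relation.TransGen (fun a b => a ∉ W ∧ b ∉ W ∧ A a b) x x

/-- The minimum cardinality of a feedback vertex set of the digraph with arc relation `A`. -/
noncomputable def MFVS {V : Type*} (A : V → V → Prop) : ℕ :=
  sInf {k | ∃ W : Finset V, IsFVS A W ∧ W.card = k}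

/-- The digraph `D_n` on `2n` vertices `(i, 0) = u_i` and `(i, 1) = v_i` whose arcs are
exactly `(u_i, v_i)` and `(v_i, u_i)`: the disjoint union of `n` bidirected `2`-cycles. -/
def twoCycles (n : ℕ) : (Fin n × Fin 2) → (Fin n × Fin 2) → Prop :=
  fun a b => a.1 = b.1 ∧ a.2 ≠ b.2

set_option maxHeartbeats 1000000

lemma cardV (n : ℕ) : Fintype.card (Fin n × Fin 2) = n * 2 := by simp

noncomputable def phi (n : ℕ) : Fin (Fintype.card (Fin n × Fin 2)) → Fin n × Fin 2 :=
  fun k => (⟨k.val / 2, by have h := k.isLt; have hc := cardV n; omega⟩,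
            ⟨k.val % 2, by omega⟩)

lemma phi_bij (n : ℕ) : Function.Bijective (phi n) := by
  constructor
  · intro a b hab
    have h1 : a.val / 2 = b.val / 2 := congrArg (fun p => (p.1 : Fin n).val) hab
    have h2 : a.val % 2 = b.val % 2 := congrArg (fun p => (p.2 : Fin 2).val) hab
    exact Fin.ext (by omega)
  · intro x
    refine ⟨⟨2 * x.1.val + x.2.val, by rw [cardV]; have := x.1.isLt; have := x.2.isLt; omega⟩, ?_⟩
    have h1 := x.1.isLt; have h2 := x.2.isLt
    simp only [phi]
    exact Prod.ext (Fin.ext (by simp; omega)) (Fin.ext (by simp; omega))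

lemma mem_prefix_lt {n : ℕ} (instE : DecidableEq (Fin n × Fin 2))
    (i : Fin (Fintype.card (Fin n × Fin 2))) (x : Fin n × Fin 2) :
    x ∈ @Finset.image _ _ instE (phi n) (Finset.univ.filter (fun j => j < i)) ↔
      2 * x.1.val + x.2.val < i.val := by
  rw [Finset.mem_image]
  simp only [Finset.mem_filter, Finset.mem_univ, true_and]
  constructor
  · rintro ⟨j, hj, rfl⟩
    have hj' : j.val < i.val := hj
    simp only [phi]
    omega
  · intro h
    have hN : 2 * x.1.val + x.2.val < Fintype.card (Fin n × Fin 2) :=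
      lt_trans h i.isLt
    refine ⟨⟨2 * x.1.val + x.2.val, hN⟩, h, ?_⟩
    have h2 := x.2.isLt
    simp only [phi]
    exact Prod.ext (Fin.ext (by simp; omega)) (Fin.ext (by simp; omega))

lemma mem_prefix_le {n : ℕ} (instE : DecidableEq (Fin n × Fin 2))
    (i : Fin (Fintype.card (Fin n × Fin 2))) (x : Fin n × Fin 2) :
    x ∈ @Finset.image _ _ instE (phi n) (Finset.univ.filter (fun j => j ≤ i)) ↔
      2 * x.1.val + x.2.val < i.val + 1 := by
  rw [Finset.mem_image]
  simp only [Finset.mem_filter, Finset.mem_univ, true_and]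
  constructor
  · rintro ⟨j, hj, rfl⟩
    have hj' : j.val ≤ i.val := hj
    simp only [phi]
    omega
  · intro h
    have hN : 2 * x.1.val + x.2.val < Fintype.card (Fin n × Fin 2) := by
      have := i.isLt; omega
    refine ⟨⟨2 * x.1.val + x.2.val, hN⟩, Nat.lt_succ_iff.mp h, ?_⟩
    have h2 := x.2.isLt
    simp only [phi]
    exact Prod.ext (Fin.ext (by simp; omega)) (Fin.ext (by simp; omega))

lemma mem_buffered_char {n m : ℕ} {S : Finset (Fin n × Fin 2)}
    (hS : ∀ x : Fin n × Fin 2, x ∈ S ↔ 2 * x.1.val + x.2.val < m) (u : Fin n × Fin 2) :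
    u ∈ buffered (twoCycles n) S ↔ m = 2 * u.1.val + 1 ∧ u.2.val = 0 := by
  have key : ∀ {α : Type} (p : α → Prop) (inst : DecidablePred p) (s : Finset α) (a : α),
      a ∈ @Finset.filter α p inst s ↔ a ∈ s ∧ p a := fun p inst s a => @Finset.mem_filter _ p inst s a
  rw [buffered]; refine (key _ _ _ _).trans ?_
  simp only [twoCycles]
  constructor
  · rintro ⟨hu, v, hv, h1, h2⟩
    rw [hS] at hu
    rw [hS] at hv
    have hv1 : v.1.val = u.1.val := by rw [h1]
    have hne : u.2.val ≠ v.2.val := fun h => h2 (Fin.ext h)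
    have := u.2.isLt; have := v.2.isLt
    omega
  · rintro ⟨hm, hu2⟩
    have hu : u ∈ S := by rw [hS]; omega
    refine ⟨hu, (u.1, ⟨1, by omega⟩), ?_, rfl, ?_⟩
    · rw [hS]; simp; omega
    · intro h
      have : u.2.val = 1 := congrArg Fin.val h
      omega

lemma term_eq_one {n : ℕ} (instE : DecidableEq (Fin n × Fin 2))
    (i : Fin (Fintype.card (Fin n × Fin 2)))
    (instD : Decidable (phi n i ∈ buffered (twoCycles n)
      (@Finset.image _ _ instE (phi n) (Finset.univ.filter (fun j => j ≤ i))))) :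
    (buffered (twoCycles n)
        (@Finset.image _ _ instE (phi n) (Finset.univ.filter (fun j => j < i)))).card +
      (@ite ℕ (phi n i ∈ buffered (twoCycles n)
          (@Finset.image _ _ instE (phi n) (Finset.univ.filter (fun j => j ≤ i))))
        instD 1 0) = 1 := by
  have hcard : (buffered (twoCycles n)
      (@Finset.image _ _ instE (phi n) (Finset.univ.filter (fun j => j < i)))).card
        = i.val % 2 := by
    have hchar := mem_buffered_char (n := n) (m := i.val) (mem_prefix_lt instE i)
    by_cases h2 : i.val % 2 = 1
    · have hk : i.val / 2 < n := by have := i.isLt; have hc := cardV n; omega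
      have heq : buffered (twoCycles n)
          (@Finset.image _ _ instE (phi n) (Finset.univ.filter (fun j => j < i)))
          = {(⟨i.val / 2, hk⟩, ⟨0, by omega⟩)} := by
        ext u
        rw [hchar, Finset.mem_singleton, Prod.ext_iff, Fin.ext_iff, Fin.ext_iff]
        simp only []
        omega
      rw [heq, Finset.card_singleton]; omega
    · have heq : buffered (twoCycles n)
          (@Finset.image _ _ instE (phi n) (Finset.univ.filter (fun j => j < i)))
          = ∅ := by
        ext u
        rw [hchar]
        simp only [Finset.notMem_empty, iff_false, not_and]
        omega
      rw [heq, Finset.card_empty]; omega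
  have hind : (phi n i ∈ buffered (twoCycles n)
      (@Finset.image _ _ instE (phi n) (Finset.univ.filter (fun j => j ≤ i))))
        ↔ i.val % 2 = 0 := by
    have hchar := mem_buffered_char (n := n) (m := i.val + 1) (mem_prefix_le instE i)
    rw [hchar]
    simp only [phi]
    omega
  rw [hcard]
  split
  · have := hind.mp (by assumption)
    omega
  · have h2 : ¬ (i.val % 2 = 0) := fun h => (by assumption : ¬ _) (hind.mpr h)
    omega

lemma mem_buffered_of {V : Type*} [Fintype V] {A : V → V → Prop} {S : Finset V} {u : V}
    (v : V) (hu : u ∈ S) (hv : v ∉ S) (h : A u v) : u ∈ buffered A S :=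
  Finset.mem_filter.mpr ⟨hu, v, hv, h⟩

lemma one_le_term {n : ℕ} (instE : DecidableEq (Fin n × Fin 2))
    (φ : Fin (Fintype.card (Fin n × Fin 2)) → Fin n × Fin 2)
    (hN : 0 < Fintype.card (Fin n × Fin 2))
    (instD : Decidable (φ ⟨0, hN⟩ ∈ buffered (twoCycles n)
      (@Finset.image _ _ instE φ (Finset.univ.filter (fun j => j ≤ (⟨0, hN⟩ : Fin _)))))) :
    1 ≤ (buffered (twoCycles n)
        (@Finset.image _ _ instE φ (Finset.univ.filter (fun j => j < (⟨0, hN⟩ : Fin _))))).card +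
      (@ite ℕ (φ ⟨0, hN⟩ ∈ buffered (twoCycles n)
          (@Finset.image _ _ instE φ (Finset.univ.filter (fun j => j ≤ (⟨0, hN⟩ : Fin _)))))
        instD 1 0) := by
  have hset : @Finset.image _ _ instE φ (Finset.univ.filter (fun j => j ≤ (⟨0, hN⟩ : Fin _)))
      = {φ ⟨0, hN⟩} := by
    ext x
    rw [Finset.mem_image]
    simp only [Finset.mem_filter, Finset.mem_univ, true_and, Finset.mem_singleton]
    constructor
    · rintro ⟨j, hj, rfl⟩
      have hj' : j.val ≤ 0 := hj
      have hz : j = (⟨0, hN⟩ : Fin _) := Fin.ext (Nat.le_zero.mp hj')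
      rw [hz]
    · rintro rfl; exact ⟨⟨0, hN⟩, le_refl _, rfl⟩
  have hmem : φ ⟨0, hN⟩ ∈ buffered (twoCycles n)
      (@Finset.image _ _ instE φ (Finset.univ.filter (fun j => j ≤ (⟨0, hN⟩ : Fin _)))) := by
    rw [hset]
    refine mem_buffered_of ((φ ⟨0, hN⟩).1, ⟨1 - (φ ⟨0, hN⟩).2.val, by omega⟩)
      (Finset.mem_singleton_self _) ?_ ⟨rfl, ?_⟩
    · rw [Finset.mem_singleton]
      intro h
      have h2 := congrArg (fun p => (p.2 : Fin 2).val) h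
      have h3 := (φ (⟨0, hN⟩ : Fin _)).2.isLt
      simp only at h2
      omega
    · intro h
      have h2 := congrArg Fin.val h
      have h3 := (φ (⟨0, hN⟩ : Fin _)).2.isLt
      simp only at h2
      omega
  split
  · omega
  · exact absurd hmem (by assumption)

lemma rb_ge_one {n : ℕ} (hn : 1 ≤ n)
    (φ : Fin (Fintype.card (Fin n × Fin 2)) → Fin n × Fin 2) :
    1 ≤ RB (twoCycles n) φ := by
  have hN : 0 < Fintype.card (Fin n × Fin 2) := by have hc := cardV n; omega
  unfold RB
  refine le_trans ?_ (Finset.le_sup (Finset.mem_univ (⟨0, hN⟩ : Fin _)))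
  exact one_le_term _ φ hN _

/-- For the disjoint union `D_n` of `n ≥ 1` bidirected `2`-cycles, the minimum feedback
vertex set has size `n`, while `MRB(D_n) = 1`; so the gap between the two quantities can
be arbitrarily large. -/
theorem mfvs_two_cycles (n : ℕ) (hn : 1 ≤ n) :
    MFVS (twoCycles n) = n ∧ MRB (twoCycles n) = 1 := by
  constructor
  · -- MFVS = n
    have hW : IsFVS (twoCycles n) (Finset.univ.image (fun i : Fin n => (i, (0 : Fin 2)))) := by
      intro x hx
      have hno : ∀ a b : Fin n × Fin 2,
          ¬ (a ∉ Finset.univ.image (fun i : Fin n => (i, (0 : Fin 2))) ∧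
             b ∉ Finset.univ.image (fun i : Fin n => (i, (0 : Fin 2))) ∧ twoCycles n a b) := by
        rintro a b ⟨ha, hb, h1, h2⟩
        have ha2 : a.2 ≠ 0 := by
          intro h; exact ha (Finset.mem_image.mpr ⟨a.1, Finset.mem_univ _, by
            rw [← h]⟩)
        have hb2 : b.2 ≠ 0 := by
          intro h; exact hb (Finset.mem_image.mpr ⟨b.1, Finset.mem_univ _, by
            rw [← h]⟩)
        apply h2
        have := a.2.isLt; have := b.2.isLt
        have ha2' : a.2.val ≠ 0 := fun h => ha2 (Fin.ext h)
        have hb2' : b.2.val ≠ 0 := fun h => hb2 (Fin.ext h)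
        exact Fin.ext (by omega)
      cases hx with
      | single h => exact hno _ _ h
      | tail _ h => exact hno _ _ h
    have hWcard : (Finset.univ.image (fun i : Fin n => (i, (0 : Fin 2)))).card = n := by
      rw [Finset.card_image_of_injective _ (fun a b h => (Prod.ext_iff.mp h).1)]
      simp
    have hmemset : n ∈ {k | ∃ W : Finset (Fin n × Fin 2), IsFVS (twoCycles n) W ∧ W.card = k} :=
      ⟨_, hW, hWcard⟩
    have hlower : ∀ k ∈ {k | ∃ W : Finset (Fin n × Fin 2),
        IsFVS (twoCycles n) W ∧ W.card = k}, n ≤ k := by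
      rintro k ⟨W, hFVS, rfl⟩
      have hcover : ∀ i : Fin n, ((i, (0 : Fin 2)) ∈ W) ∨ ((i, (1 : Fin 2)) ∈ W) := by
        intro i
        by_contra h
        push_neg at h
        obtain ⟨h0, h1⟩ := h
        have hstep1 : (i, (0 : Fin 2)) ∉ W ∧ (i, (1 : Fin 2)) ∉ W ∧
            twoCycles n (i, (0 : Fin 2)) (i, (1 : Fin 2)) := ⟨h0, h1, rfl, by simp⟩
        have hstep2 : (i, (1 : Fin 2)) ∉ W ∧ (i, (0 : Fin 2)) ∉ W ∧
            twoCycles n (i, (1 : Fin 2)) (i, (0 : Fin 2)) := ⟨h1, h0, rfl, by simp⟩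
        exact hFVS (i, (0 : Fin 2))
          (Relation.TransGen.head hstep1 (Relation.TransGen.single hstep2))
      set f : Fin n → Fin n × Fin 2 := fun i =>
        if (i, (0 : Fin 2)) ∈ W then (i, (0 : Fin 2)) else (i, (1 : Fin 2)) with hf
      have hfW : ∀ i, f i ∈ W := by
        intro i
        rcases hcover i with h | h
        · simp [hf, h]
        · by_cases h0 : (i, (0 : Fin 2)) ∈ W
          · simp [hf, h0]
          · simp [hf, h0, h]
      have hfinj : Function.Injective f := by
        intro a b hab
        have : (f a).1 = (f b).1 := by rw [hab]
        simpa [hf, apply_ite Prod.fst] using this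
      calc n = (Finset.univ.image f).card := by
              rw [Finset.card_image_of_injective _ hfinj]; simp
        _ ≤ W.card := Finset.card_le_card (by
              intro x hx
              obtain ⟨i, _, rfl⟩ := Finset.mem_image.mp hx
              exact hfW i)
    exact le_antisymm (Nat.sInf_le hmemset) (le_csInf ⟨n, hmemset⟩ hlower)
  · -- MRB = 1
    have hRB : RB (twoCycles n) (phi n) = 1 := by
      apply le_antisymm
      · apply Finset.sup_le
        intro i _
        exact (term_eq_one _ i _).le
      · exact rb_ge_one hn (phi n)
    have hmem : 1 ∈ {k | ∃ φ : Fin (Fintype.card (Fin n × Fin 2)) → Fin n × Fin 2,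
        Function.Bijective φ ∧ RB (twoCycles n) φ = k} := ⟨phi n, phi_bij n, hRB⟩
    refine le_antisymm (Nat.sInf_le hmem) (le_csInf ⟨1, hmem⟩ ?_)
    rintro k ⟨φ, _, rfl⟩
    exact rb_ge_one hn φ
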